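/- Fix λ₁ ≥ 0, λ₂ > 0 and an integer p ≥ 1, and let g : ℝ^p → ℝ be g(u) = λ₁‖u‖ + (λ₂/2)‖u‖². Then the Fenchel conjugate of g satisfies g*(v) := sup_{u ∈ ℝ^p} (⟨v, u⟩ − g(u)) = (1/(2λ₂))‖BST(v, λ₁)‖² for every v ∈ ℝ^p. -/

import Mathlib

open scoped RealInnerProductSpace

/-- The block soft-thresholding operator `BST(a, τ) = (1 − τ/‖a‖)₊ a`, with `BST(0, τ) = 0`
(automatic here since the scalar multiplies `a = 0`), so that `‖BST(a, τ)‖ = (‖a‖ − τ)₊`. -/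
noncomputable def BST {p : ℕ} (a : EuclideanSpace ℝ (Fin p)) (τ : ℝ) :
    EuclideanSpace ℝ (Fin p) :=
  max (1 - τ / ‖a‖) 0 • a

/-- **Fenchel conjugate of `g(u) = λ₁‖u‖ + (λ₂/2)‖u‖²`**: for every `v ∈ ℝ^p`,
`g*(v) = sup_u (⟪v, u⟫ − g(u)) = (1/(2λ₂))‖BST(v, λ₁)‖²`. -/
theorem fenchel_conjugate_groupLasso_eq_BST {p : ℕ} (hp : 1 ≤ p)
    (lam1 lam2 : ℝ) (hlam1 : 0 ≤ lam1) (hlam2 : 0 < lam2)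
    (v : EuclideanSpace ℝ (Fin p)) :
    (⨆ u : EuclideanSpace ℝ (Fin p), (⟪v, u⟫ - (lam1 * ‖u‖ + lam2 / 2 * ‖u‖ ^ 2))) =
      1 / (2 * lam2) * ‖BST v lam1‖ ^ 2 := by
  set s : ℝ := max (1 - lam1 / ‖v‖) 0 with hs
  set c : ℝ := max (‖v‖ - lam1) 0 with hc
  have hc0 : 0 ≤ c := le_max_right _ _
  have hs0 : 0 ≤ s := le_max_right _ _
  have hsc : s * ‖v‖ = c := by
    rcases eq_or_ne v 0 with hv | hv
    · simp [hs, hc, hv, max_eq_right (neg_nonpos_of_nonneg hlam1)]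
    · have hvpos : (0:ℝ) < ‖v‖ := norm_pos_iff.mpr hv
      rw [hs, hc, max_mul_of_nonneg _ _ hvpos.le, zero_mul]
      congr 1
      field_simp
  have hBST : ‖BST v lam1‖ = c := by
    rw [BST, norm_smul, Real.norm_eq_abs, abs_of_nonneg hs0, hsc]
  rw [hBST]
  have hub : ∀ u : EuclideanSpace ℝ (Fin p),
      ⟪v, u⟫ - (lam1 * ‖u‖ + lam2 / 2 * ‖u‖ ^ 2) ≤ 1 / (2 * lam2) * c ^ 2 := by
    intro u
    have h1 : ⟪v, u⟫ ≤ ‖v‖ * ‖u‖ := real_inner_le_norm v u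
    have h2 : ‖v‖ - lam1 ≤ c := le_max_left _ _
    have h3 : (0:ℝ) ≤ ‖u‖ := norm_nonneg u
    have key : 2 * lam2 * (⟪v, u⟫ - (lam1 * ‖u‖ + lam2 / 2 * ‖u‖ ^ 2)) ≤ c ^ 2 := by
      nlinarith [sq_nonneg (lam2 * ‖u‖ - c), mul_le_mul_of_nonneg_left h1 hlam2.le,
        mul_le_mul_of_nonneg_right h2 (mul_nonneg hlam2.le h3)]
    rw [show 1 / (2 * lam2) * c ^ 2 = c ^ 2 / (2 * lam2) by ring,
      le_div_iff₀ (by positivity)]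
    linarith [key]
  -- the maximizer
  set u₀ : EuclideanSpace ℝ (Fin p) := lam2⁻¹ • BST v lam1 with hu₀
  have hinner : ⟪v, u₀⟫ = lam2⁻¹ * (s * ‖v‖ ^ 2) := by
    rw [hu₀, BST, real_inner_smul_right, real_inner_smul_right,
      real_inner_self_eq_norm_sq]
  have hnorm : ‖u₀‖ = lam2⁻¹ * c := by
    rw [hu₀, norm_smul, Real.norm_eq_abs, abs_of_nonneg (inv_nonneg.mpr hlam2.le), hBST]
  have hcc : c * (‖v‖ - lam1) = c * c := by
    rcases le_or_gt (‖v‖ - lam1) 0 with h | h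
    · have : c = 0 := max_eq_right h
      simp [this]
    · have : c = ‖v‖ - lam1 := max_eq_left h.le
      rw [this]
  have hattain : ⟪v, u₀⟫ - (lam1 * ‖u₀‖ + lam2 / 2 * ‖u₀‖ ^ 2) = 1 / (2 * lam2) * c ^ 2 := by
    rw [hinner, hnorm]
    have hsv : s * ‖v‖ ^ 2 = c * ‖v‖ := by
      rw [pow_two, ← mul_assoc, hsc]
    rw [hsv]
    have hl2 : lam2 ≠ 0 := hlam2.ne'
    field_simp
    linear_combination 2 * hcc
  apply le_antisymm
  · exact ciSup_le hub
  · rw [← hattain]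
    exact le_ciSup ⟨1 / (2 * lam2) * c ^ 2, Set.forall_mem_range.mpr hub⟩ u₀
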